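/- For all I, J ∈ B_{k,n}: a_J(ξ_n(I)) = exp(i(k−1)π(⟨I⟩−⟨J⟩)/n) · a_I(ξ_n(J)). Consequently, S_J(ξ_n(I)) · S_I(ξ_n(I_0)) = S_I(ξ_n(J)) · S_J(ξ_n(I_0)), i.e. S_J(ξ_n(I)) = (S_J(ξ_n(I_0))/S_I(ξ_n(I_0))) · S_I(ξ_n(J)) whenever S_I(ξ_n(I_0)) ≠ 0. -/

import Mathlib

noncomputable section

open Finset

namespace Paper

def aJ (k : ℕ) (J : Fin k → ℤ) (u : Fin k → ℝ) : ℂ :=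
  Matrix.det (Matrix.of fun l m : Fin k => Complex.exp (Complex.I * (u l : ℂ) * (J m : ℂ)))

def I0 (k : ℕ) : Fin k → ℤ := fun i => (k : ℤ) - 1 - (i : ℤ)

def Vdm (k : ℕ) (u : Fin k → ℝ) : ℂ := aJ k (I0 k) u

def SJ (k : ℕ) (J : Fin k → ℤ) (u : Fin k → ℝ) : ℂ := aJ k J u / Vdm k u

def xi (k n : ℕ) (I : Fin k → ℤ) : Fin k → ℝ :=
  fun j => (2 * Real.pi / (n : ℝ)) * ((I j : ℝ) - ((k : ℝ) - 1) / 2)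

def sz (k : ℕ) (I : Fin k → ℤ) : ℤ := ∑ i, I i

def Emat (k n : ℕ) (I J : Fin k → ℤ) : Matrix (Fin k) (Fin k) ℂ :=
  Matrix.of fun l m => Complex.exp (2 * (Real.pi : ℂ) * Complex.I * (I l : ℂ) * (J m : ℂ) / (n : ℂ))

lemma Emat_symm (k n : ℕ) (I J : Fin k → ℤ) : (Emat k n I J).det = (Emat k n J I).det := by
  rw [← Matrix.det_transpose (Emat k n J I)]
  congr 1
  ext l m
  simp only [Emat, Matrix.transpose_apply, Matrix.of_apply]
  congr 1
  ring

lemma aJ_xi (k n : ℕ) (I J : Fin k → ℤ) :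
    aJ k J (xi k n I) =
      Complex.exp ((-(Complex.I * ((k : ℂ) - 1) * (Real.pi : ℂ)) / (n : ℂ)) * (sz k J : ℂ)) *
        (Emat k n I J).det := by
  have h1 : (Matrix.of fun l m : Fin k =>
        Complex.exp (Complex.I * ((xi k n I l : ℝ) : ℂ) * ((J m : ℤ) : ℂ)))
      = Matrix.of (fun l m : Fin k =>
          Complex.exp ((-(Complex.I * ((k : ℂ) - 1) * (Real.pi : ℂ)) / (n : ℂ)) * (J m : ℂ)) *
          Emat k n I J l m) := by
    ext l m
    simp only [Matrix.of_apply, Emat, ← Complex.exp_add]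
    congr 1
    unfold xi
    push_cast
    ring
  unfold aJ
  rw [h1, Matrix.det_mul_row]
  congr 1
  rw [← Complex.exp_sum]
  congr 1
  rw [← Finset.mul_sum]
  congr 1
  unfold sz
  push_cast
  ring

lemma aJ_symm (k n : ℕ) (I J : Fin k → ℤ) :
    aJ k J (xi k n I) =
      Complex.exp (Complex.I * ((k : ℂ) - 1) * (Real.pi : ℂ) *
        ((sz k I : ℂ) - (sz k J : ℂ)) / (n : ℂ)) * aJ k I (xi k n J) := by
  rw [aJ_xi, aJ_xi, Emat_symm, ← mul_assoc, ← Complex.exp_add]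
  congr 2
  ring

lemma Vdm_ne (k n : ℕ) (hn : 0 < n) (I : Fin k → ℤ)
    (hIdec : ∀ i j : Fin k, i < j → I j < I i)
    (hIbd : ∀ i, 0 ≤ I i ∧ I i < (n : ℤ)) :
    Vdm k (xi k n I) ≠ 0 := by
  have hM : (Matrix.of fun l m : Fin k =>
        Complex.exp (Complex.I * ((xi k n I l : ℝ) : ℂ) * ((I0 k m : ℤ) : ℂ)))
      = (Matrix.vandermonde fun l : Fin k =>
          Complex.exp (Complex.I * ((xi k n I l : ℝ) : ℂ))).submatrix id Fin.revPerm := by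
    ext l m
    simp only [Matrix.of_apply, Matrix.submatrix_apply, Matrix.vandermonde_apply, id_eq]
    rw [← Complex.exp_nat_mul]
    congr 1
    have hm : ((Fin.revPerm m : Fin k) : ℕ) = k - 1 - (m : ℕ) := by
      simp [Fin.val_rev]; omega
    have hm2 : (((Fin.revPerm m : Fin k) : ℕ) : ℂ) = (k : ℂ) - 1 - ((m : ℕ) : ℂ) := by
      rw [hm]
      have := m.isLt
      push_cast [Nat.cast_sub (by omega : 1 ≤ k), Nat.cast_sub (by omega : (m : ℕ) ≤ k - 1)]
      ring
    rw [hm2]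
    unfold I0
    push_cast
    ring
  have hinj : Function.Injective fun l : Fin k =>
      Complex.exp (Complex.I * ((xi k n I l : ℝ) : ℂ)) := by
    intro l m hlm
    simp only at hlm
    rw [Complex.exp_eq_exp_iff_exists_int] at hlm
    obtain ⟨t, ht⟩ := hlm
    have hreal : (xi k n I l : ℝ) = xi k n I m + t * (2 * Real.pi) := by
      have : (Complex.I : ℂ) * (xi k n I l : ℝ) = Complex.I * ((xi k n I m : ℝ) + t * (2 * Real.pi)) := by
        rw [ht]; push_cast; ring
      have := mul_left_cancel₀ Complex.I_ne_zero this
      exact_mod_cast this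
    have hpi : Real.pi ≠ 0 := Real.pi_ne_zero
    have hn' : (n : ℝ) ≠ 0 := by positivity
    have hIlm : (I l : ℝ) - I m = (n : ℝ) * t := by
      unfold xi at hreal
      have h3 : (2 * Real.pi) * (((I l : ℝ) - I m) / (n : ℝ) - t) = 0 := by
        linear_combination hreal
      have h4 : ((I l : ℝ) - I m) / (n : ℝ) - t = 0 := by
        rcases mul_eq_zero.mp h3 with h | h
        · exact absurd h (by positivity)
        · exact h
      have h5 : ((I l : ℝ) - I m) / (n : ℝ) = t := by linarith
      rw [div_eq_iff hn'] at h5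
      linarith
    have hIlmZ : I l - I m = (n : ℤ) * t := by exact_mod_cast hIlm
    have hIl := hIbd l
    have hIm := hIbd m
    have hn1 : (1 : ℤ) ≤ (n : ℤ) := by exact_mod_cast hn
    have hteq : I l = I m := by
      rcases lt_trichotomy t 0 with h | h | h
      · nlinarith [hIlmZ, hn1, h, hIl.1, hIl.2, hIm.1, hIm.2]
      · rw [h, mul_zero] at hIlmZ; omega
      · nlinarith [hIlmZ, hn1, h, hIl.1, hIl.2, hIm.1, hIm.2]
    by_contra hne
    rcases Ne.lt_or_gt (fun h => hne h : l ≠ m) with h | h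
    · exact absurd hteq (by have := hIdec l m h; omega)
    · exact absurd hteq (by have := hIdec m l h; omega)
  unfold Vdm aJ
  rw [hM, Matrix.det_permute']
  refine mul_ne_zero ?_ (Matrix.det_vandermonde_ne_zero_iff.mpr hinj)
  rcases Int.units_eq_one_or (Equiv.Perm.sign (Fin.revPerm : Equiv.Perm (Fin k))) with h | h <;>
    simp [h]


theorem stmt7 (k n : ℕ) (hk : 1 ≤ k) (hkn : k ≤ n) (I J : Fin k → ℤ)
    (hIdec : ∀ i j : Fin k, i < j → I j < I i)
    (hIbd : ∀ i, 0 ≤ I i ∧ I i < (n : ℤ))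
    (hJdec : ∀ i j : Fin k, i < j → J j < J i)
    (hJbd : ∀ i, 0 ≤ J i ∧ J i < (n : ℤ)) :
    aJ k J (xi k n I) =
      Complex.exp (Complex.I * ((k : ℂ) - 1) * (Real.pi : ℂ) *
        ((sz k I : ℂ) - (sz k J : ℂ)) / (n : ℂ)) * aJ k I (xi k n J) ∧
    SJ k J (xi k n I) * SJ k I (xi k n (I0 k)) =
      SJ k I (xi k n J) * SJ k J (xi k n (I0 k)) ∧
    (SJ k I (xi k n (I0 k)) ≠ 0 →
      SJ k J (xi k n I) =
        SJ k J (xi k n (I0 k)) / SJ k I (xi k n (I0 k)) * SJ k I (xi k n J)) := by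
  have hn : 0 < n := lt_of_lt_of_le hk hkn
  have hI0dec : ∀ i j : Fin k, i < j → I0 k j < I0 k i := by
    intro i j hij
    have : (i : ℕ) < (j : ℕ) := hij
    unfold I0; omega
  have hI0bd : ∀ i : Fin k, 0 ≤ I0 k i ∧ I0 k i < (n : ℤ) := by
    intro i
    have h1 : (i : ℕ) < k := i.isLt
    unfold I0; omega
  have hVI := Vdm_ne k n hn I hIdec hIbd
  have hVJ := Vdm_ne k n hn J hJdec hJbd
  have hV0 := Vdm_ne k n hn (I0 k) hI0dec hI0bd
  have hA := aJ_symm k n I J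
  have hB := aJ_symm k n (I0 k) I
  have hC := aJ_symm k n (I0 k) J
  have hE : ∀ x y : ℂ, Complex.exp (Complex.I * ((k : ℂ) - 1) * (Real.pi : ℂ) * x / (n : ℂ)) *
      Complex.exp (Complex.I * ((k : ℂ) - 1) * (Real.pi : ℂ) * y / (n : ℂ)) =
      Complex.exp (Complex.I * ((k : ℂ) - 1) * (Real.pi : ℂ) * (x + y) / (n : ℂ)) := by
    intro x y; rw [← Complex.exp_add]; congr 1; ring
  have hpart2 : SJ k J (xi k n I) * SJ k I (xi k n (I0 k)) =
      SJ k I (xi k n J) * SJ k J (xi k n (I0 k)) := by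
    unfold SJ Vdm
    unfold Vdm at hVI hVJ hV0
    rw [hA, hB, hC]
    field_simp
    have hkey : Complex.exp (Complex.I * ((k : ℂ) - 1) * (Real.pi : ℂ) *
          (((sz k I : ℤ) : ℂ) - ((sz k J : ℤ) : ℂ)) / (n : ℂ)) *
        Complex.exp (Complex.I * ((k : ℂ) - 1) * (Real.pi : ℂ) *
          (((sz k (I0 k) : ℤ) : ℂ) - ((sz k I : ℤ) : ℂ)) / (n : ℂ)) =
        Complex.exp (Complex.I * ((k : ℂ) - 1) * (Real.pi : ℂ) *
          (((sz k (I0 k) : ℤ) : ℂ) - ((sz k J : ℤ) : ℂ)) / (n : ℂ)) := by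
      rw [← Complex.exp_add]; congr 1; ring
    linear_combination hkey * aJ k I (xi k n J)
  refine ⟨hA, hpart2, fun h0 => ?_⟩
  field_simp [h0]
  linear_combination hpart2

end Paper
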